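/- Let f(x) = x² − x − 3 and, for n ≥ 1, let Δₙ = aₙ + bₙ + cₙ be the adjacency matrix of the level-n Schreier graph of the Hanoi Towers group on three pegs. Then a real number λ is an eigenvalue of Δₙ if and only if λ = 3, or f^i(λ) = 0 for some 0 ≤ i ≤ n−1, or f^j(λ) = −2 for some 0 ≤ j ≤ n−2; that is, the spectrum of Δₙ, as a set, equals {3} ∪ ⋃_{i=0}^{n−1} f^{−i}(0) ∪ ⋃_{j=0}^{n−2} f^{−j}(−2). -/

import Mathlib

/-- Generator matrix `aₙ` (size `3ⁿ × 3ⁿ`, indexed by ternary words of length `n`):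
`a₀ = [1]`, `a_{n+1} = [[0ₙ,1ₙ,0ₙ],[1ₙ,0ₙ,0ₙ],[0ₙ,0ₙ,aₙ]]` in block form. -/
noncomputable def hanoiGenA : (n : ℕ) → Matrix (Fin n → Fin 3) (Fin n → Fin 3) ℝ
  | 0 => 1
  | n + 1 => Matrix.of fun u v =>
      (![![0, 1, 0],
         ![1, 0, 0],
         ![0, 0, hanoiGenA n]] :
        Fin 3 → Fin 3 → Matrix (Fin n → Fin 3) (Fin n → Fin 3) ℝ)
        (u 0) (v 0) (Fin.tail u) (Fin.tail v)

/-- `b₀ = [1]`, `b_{n+1} = [[0ₙ,0ₙ,1ₙ],[0ₙ,bₙ,0ₙ],[1ₙ,0ₙ,0ₙ]]`. -/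
noncomputable def hanoiGenB : (n : ℕ) → Matrix (Fin n → Fin 3) (Fin n → Fin 3) ℝ
  | 0 => 1
  | n + 1 => Matrix.of fun u v =>
      (![![0, 0, 1],
         ![0, hanoiGenB n, 0],
         ![1, 0, 0]] :
        Fin 3 → Fin 3 → Matrix (Fin n → Fin 3) (Fin n → Fin 3) ℝ)
        (u 0) (v 0) (Fin.tail u) (Fin.tail v)

/-- `c₀ = [1]`, `c_{n+1} = [[cₙ,0ₙ,0ₙ],[0ₙ,0ₙ,1ₙ],[0ₙ,1ₙ,0ₙ]]`. -/
noncomputable def hanoiGenC : (n : ℕ) → Matrix (Fin n → Fin 3) (Fin n → Fin 3) ℝ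
  | 0 => 1
  | n + 1 => Matrix.of fun u v =>
      (![![hanoiGenC n, 0, 0],
         ![0, 0, 1],
         ![0, 1, 0]] :
        Fin 3 → Fin 3 → Matrix (Fin n → Fin 3) (Fin n → Fin 3) ℝ)
        (u 0) (v 0) (Fin.tail u) (Fin.tail v)

/-- The adjacency matrix `Δₙ = aₙ + bₙ + cₙ` of the level-`n` Schreier graph `Γₙ`
of the Hanoi Towers group on three pegs. -/
noncomputable def hanoiAdj (n : ℕ) : Matrix (Fin n → Fin 3) (Fin n → Fin 3) ℝ :=
  hanoiGenA n + hanoiGenB n + hanoiGenC n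

/-- The quadratic polynomial `f(x) = x² - x - 3`. -/
noncomputable def hanoiF (x : ℝ) : ℝ := x ^ 2 - x - 3


namespace HanoiAux

open Matrix

abbrev I (n : ℕ) := Fin n → Fin 3

lemma sum_pi_succ {n : ℕ} (g : I (n + 1) → ℝ) :
    ∑ u, g u = ∑ j : Fin 3, ∑ t : I n, g (Fin.cons j t) := by
  rw [← Equiv.sum_comp (Fin.consEquiv (fun _ => Fin 3)) g, Fintype.sum_prod_type]
  rfl

lemma block_mulVec {n : ℕ} (M : Fin 3 → Fin 3 → Matrix (I n) (I n) ℝ)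
    (v : I (n + 1) → ℝ) (j : Fin 3) (t : I n) :
    (Matrix.of fun u w : I (n+1) => M (u 0) (w 0) (Fin.tail u) (Fin.tail w)).mulVec v (Fin.cons j t)
      = ∑ k : Fin 3, (M j k).mulVec (fun s => v (Fin.cons k s)) t := by
  simp only [Matrix.mulVec, dotProduct, Matrix.of_apply, Fin.cons_zero, Fin.tail_cons]
  rw [sum_pi_succ]
  simp [Fin.cons_zero, Fin.tail_cons]

lemma genA_succ (n : ℕ) : hanoiGenA (n + 1) = Matrix.of fun u w : I (n + 1) =>
    (![![0, 1, 0], ![1, 0, 0], ![0, 0, hanoiGenA n]] :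
      Fin 3 → Fin 3 → Matrix (I n) (I n) ℝ) (u 0) (w 0) (Fin.tail u) (Fin.tail w) := rfl

lemma mulVecA0 {n : ℕ} (v : I (n + 1) → ℝ) (t : I n) :
    (hanoiGenA (n + 1)).mulVec v (Fin.cons 0 t) = v (Fin.cons 1 t) := by
  rw [genA_succ, block_mulVec]
  simp [Fin.sum_univ_three, Matrix.one_mulVec, Matrix.zero_mulVec]

lemma mulVecA1 {n : ℕ} (v : I (n + 1) → ℝ) (t : I n) :
    (hanoiGenA (n + 1)).mulVec v (Fin.cons 1 t) = v (Fin.cons 0 t) := by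
  rw [genA_succ, block_mulVec]
  simp [Fin.sum_univ_three, Matrix.one_mulVec, Matrix.zero_mulVec]

lemma mulVecA2 {n : ℕ} (v : I (n + 1) → ℝ) (t : I n) :
    (hanoiGenA (n + 1)).mulVec v (Fin.cons 2 t) = (hanoiGenA n).mulVec (fun s => v (Fin.cons 2 s)) t := by
  rw [genA_succ, block_mulVec]
  simp [Fin.sum_univ_three, Matrix.one_mulVec, Matrix.zero_mulVec]

lemma genB_succ (n : ℕ) : hanoiGenB (n + 1) = Matrix.of fun u w : I (n + 1) =>
    (![![0, 0, 1], ![0, hanoiGenB n, 0], ![1, 0, 0]] :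
      Fin 3 → Fin 3 → Matrix (I n) (I n) ℝ) (u 0) (w 0) (Fin.tail u) (Fin.tail w) := rfl

lemma mulVecB0 {n : ℕ} (v : I (n + 1) → ℝ) (t : I n) :
    (hanoiGenB (n + 1)).mulVec v (Fin.cons 0 t) = v (Fin.cons 2 t) := by
  rw [genB_succ, block_mulVec]
  simp [Fin.sum_univ_three, Matrix.one_mulVec, Matrix.zero_mulVec]

lemma mulVecB1 {n : ℕ} (v : I (n + 1) → ℝ) (t : I n) :
    (hanoiGenB (n + 1)).mulVec v (Fin.cons 1 t) = (hanoiGenB n).mulVec (fun s => v (Fin.cons 1 s)) t := by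
  rw [genB_succ, block_mulVec]
  simp [Fin.sum_univ_three, Matrix.one_mulVec, Matrix.zero_mulVec]

lemma mulVecB2 {n : ℕ} (v : I (n + 1) → ℝ) (t : I n) :
    (hanoiGenB (n + 1)).mulVec v (Fin.cons 2 t) = v (Fin.cons 0 t) := by
  rw [genB_succ, block_mulVec]
  simp [Fin.sum_univ_three, Matrix.one_mulVec, Matrix.zero_mulVec]

lemma genC_succ (n : ℕ) : hanoiGenC (n + 1) = Matrix.of fun u w : I (n + 1) =>
    (![![hanoiGenC n, 0, 0], ![0, 0, 1], ![0, 1, 0]] :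
      Fin 3 → Fin 3 → Matrix (I n) (I n) ℝ) (u 0) (w 0) (Fin.tail u) (Fin.tail w) := rfl

lemma mulVecC0 {n : ℕ} (v : I (n + 1) → ℝ) (t : I n) :
    (hanoiGenC (n + 1)).mulVec v (Fin.cons 0 t) = (hanoiGenC n).mulVec (fun s => v (Fin.cons 0 s)) t := by
  rw [genC_succ, block_mulVec]
  simp [Fin.sum_univ_three, Matrix.one_mulVec, Matrix.zero_mulVec]

lemma mulVecC1 {n : ℕ} (v : I (n + 1) → ℝ) (t : I n) :
    (hanoiGenC (n + 1)).mulVec v (Fin.cons 1 t) = v (Fin.cons 2 t) := by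
  rw [genC_succ, block_mulVec]
  simp [Fin.sum_univ_three, Matrix.one_mulVec, Matrix.zero_mulVec]

lemma mulVecC2 {n : ℕ} (v : I (n + 1) → ℝ) (t : I n) :
    (hanoiGenC (n + 1)).mulVec v (Fin.cons 2 t) = v (Fin.cons 1 t) := by
  rw [genC_succ, block_mulVec]
  simp [Fin.sum_univ_three, Matrix.one_mulVec, Matrix.zero_mulVec]

lemma cons_cases {n : ℕ} {P : I (n + 1) → Prop}
    (h0 : ∀ t, P (Fin.cons 0 t)) (h1 : ∀ t, P (Fin.cons 1 t))
    (h2 : ∀ t, P (Fin.cons 2 t)) : ∀ u, P u := by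
  intro u
  obtain ⟨j, t, rfl⟩ : ∃ j t, u = Fin.cons j t :=
    ⟨u 0, Fin.tail u, (Fin.cons_self_tail u).symm⟩
  fin_cases j
  · exact h0 t
  · exact h1 t
  · exact h2 t

lemma adj0 {n : ℕ} (v : I (n + 1) → ℝ) (t : I n) :
    (hanoiAdj (n + 1)).mulVec v (Fin.cons 0 t)
      = (hanoiGenC n).mulVec (fun s => v (Fin.cons 0 s)) t
        + v (Fin.cons 1 t) + v (Fin.cons 2 t) := by
  simp only [hanoiAdj, Matrix.add_mulVec, Pi.add_apply, mulVecA0, mulVecB0, mulVecC0]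
  try ring

lemma adj1 {n : ℕ} (v : I (n + 1) → ℝ) (t : I n) :
    (hanoiAdj (n + 1)).mulVec v (Fin.cons 1 t)
      = v (Fin.cons 0 t) + (hanoiGenB n).mulVec (fun s => v (Fin.cons 1 s)) t
        + v (Fin.cons 2 t) := by
  simp only [hanoiAdj, Matrix.add_mulVec, Pi.add_apply, mulVecA1, mulVecB1, mulVecC1]
  try ring

lemma adj2 {n : ℕ} (v : I (n + 1) → ℝ) (t : I n) :
    (hanoiAdj (n + 1)).mulVec v (Fin.cons 2 t)
      = v (Fin.cons 0 t) + v (Fin.cons 1 t)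
        + (hanoiGenA n).mulVec (fun s => v (Fin.cons 2 s)) t := by
  simp only [hanoiAdj, Matrix.add_mulVec, Pi.add_apply, mulVecA2, mulVecB2, mulVecC2]
  try ring

lemma invA : ∀ (n : ℕ) (v : I n → ℝ),
    (hanoiGenA n).mulVec ((hanoiGenA n).mulVec v) = v := by
  intro n
  induction n with
  | zero =>
    intro v
    show (1 : Matrix (I 0) (I 0) ℝ).mulVec ((1 : Matrix (I 0) (I 0) ℝ).mulVec v) = v
    rw [Matrix.one_mulVec, Matrix.one_mulVec]
  | succ n ih =>
    intro v
    funext u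
    refine cons_cases (P := fun u =>
      (hanoiGenA (n+1)).mulVec ((hanoiGenA (n+1)).mulVec v) u = v u)
      (fun t => ?_) (fun t => ?_) (fun t => ?_) u
    · beta_reduce
      rw [mulVecA0, mulVecA1]
    · beta_reduce
      rw [mulVecA1, mulVecA0]
    · beta_reduce
      rw [mulVecA2]
      have h : (fun s => (hanoiGenA (n+1)).mulVec v (Fin.cons 2 s))
          = (hanoiGenA n).mulVec (fun s => v (Fin.cons 2 s)) := by
        funext s; rw [mulVecA2]
      rw [h, ih]

lemma invB : ∀ (n : ℕ) (v : I n → ℝ),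
    (hanoiGenB n).mulVec ((hanoiGenB n).mulVec v) = v := by
  intro n
  induction n with
  | zero =>
    intro v
    show (1 : Matrix (I 0) (I 0) ℝ).mulVec ((1 : Matrix (I 0) (I 0) ℝ).mulVec v) = v
    rw [Matrix.one_mulVec, Matrix.one_mulVec]
  | succ n ih =>
    intro v
    funext u
    refine cons_cases (P := fun u =>
      (hanoiGenB (n+1)).mulVec ((hanoiGenB (n+1)).mulVec v) u = v u)
      (fun t => ?_) (fun t => ?_) (fun t => ?_) u
    · beta_reduce
      rw [mulVecB0, mulVecB2]
    · beta_reduce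
      rw [mulVecB1]
      have h : (fun s => (hanoiGenB (n+1)).mulVec v (Fin.cons 1 s))
          = (hanoiGenB n).mulVec (fun s => v (Fin.cons 1 s)) := by
        funext s; rw [mulVecB1]
      rw [h, ih]
    · beta_reduce
      rw [mulVecB2, mulVecB0]

lemma invC : ∀ (n : ℕ) (v : I n → ℝ),
    (hanoiGenC n).mulVec ((hanoiGenC n).mulVec v) = v := by
  intro n
  induction n with
  | zero =>
    intro v
    show (1 : Matrix (I 0) (I 0) ℝ).mulVec ((1 : Matrix (I 0) (I 0) ℝ).mulVec v) = v
    rw [Matrix.one_mulVec, Matrix.one_mulVec]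
  | succ n ih =>
    intro v
    funext u
    refine cons_cases (P := fun u =>
      (hanoiGenC (n+1)).mulVec ((hanoiGenC (n+1)).mulVec v) u = v u)
      (fun t => ?_) (fun t => ?_) (fun t => ?_) u
    · beta_reduce
      rw [mulVecC0]
      have h : (fun s => (hanoiGenC (n+1)).mulVec v (Fin.cons 0 s))
          = (hanoiGenC n).mulVec (fun s => v (Fin.cons 0 s)) := by
        funext s; rw [mulVecC0]
      rw [h, ih]
    · beta_reduce
      rw [mulVecC1, mulVecC2]
    · beta_reduce
      rw [mulVecC2, mulVecC1]

lemma onesA : ∀ (n : ℕ),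
    (hanoiGenA n).mulVec (fun _ => (1:ℝ)) = fun _ => (1:ℝ) := by
  intro n
  induction n with
  | zero =>
    show (1 : Matrix (I 0) (I 0) ℝ).mulVec _ = _
    rw [Matrix.one_mulVec]
  | succ n ih =>
    funext u
    refine cons_cases (P := fun u =>
      (hanoiGenA (n+1)).mulVec (fun _ => (1:ℝ)) u = 1)
      (fun t => ?_) (fun t => ?_) (fun t => ?_) u
    · beta_reduce
      rw [mulVecA0]
    · beta_reduce
      rw [mulVecA1]
    · beta_reduce
      rw [mulVecA2]
      exact congrFun ih t

lemma onesB : ∀ (n : ℕ),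
    (hanoiGenB n).mulVec (fun _ => (1:ℝ)) = fun _ => (1:ℝ) := by
  intro n
  induction n with
  | zero =>
    show (1 : Matrix (I 0) (I 0) ℝ).mulVec _ = _
    rw [Matrix.one_mulVec]
  | succ n ih =>
    funext u
    refine cons_cases (P := fun u =>
      (hanoiGenB (n+1)).mulVec (fun _ => (1:ℝ)) u = 1)
      (fun t => ?_) (fun t => ?_) (fun t => ?_) u
    · beta_reduce
      rw [mulVecB0]
    · beta_reduce
      rw [mulVecB1]
      exact congrFun ih t
    · beta_reduce
      rw [mulVecB2]

lemma onesC : ∀ (n : ℕ),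
    (hanoiGenC n).mulVec (fun _ => (1:ℝ)) = fun _ => (1:ℝ) := by
  intro n
  induction n with
  | zero =>
    show (1 : Matrix (I 0) (I 0) ℝ).mulVec _ = _
    rw [Matrix.one_mulVec]
  | succ n ih =>
    funext u
    refine cons_cases (P := fun u =>
      (hanoiGenC (n+1)).mulVec (fun _ => (1:ℝ)) u = 1)
      (fun t => ?_) (fun t => ?_) (fun t => ?_) u
    · beta_reduce
      rw [mulVecC0]
      exact congrFun ih t
    · beta_reduce
      rw [mulVecC1]
    · beta_reduce
      rw [mulVecC2]

lemma constA (n : ℕ) (c : ℝ) :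
    (hanoiGenA n).mulVec (fun _ => c) = fun _ => c := by
  have h : (fun _ : I n => c) = c • (fun _ : I n => (1:ℝ)) := by
    funext t; simp
  rw [h, Matrix.mulVec_smul, onesA]

lemma constB (n : ℕ) (c : ℝ) :
    (hanoiGenB n).mulVec (fun _ => c) = fun _ => c := by
  have h : (fun _ : I n => c) = c • (fun _ : I n => (1:ℝ)) := by
    funext t; simp
  rw [h, Matrix.mulVec_smul, onesB]

lemma constC (n : ℕ) (c : ℝ) :
    (hanoiGenC n).mulVec (fun _ => c) = fun _ => c := by
  have h : (fun _ : I n => c) = c • (fun _ : I n => (1:ℝ)) := by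
    funext t; simp
  rw [h, Matrix.mulVec_smul, onesC]

lemma mem_spec_iff {m : Type*} [Fintype m] [DecidableEq m] (M : Matrix m m ℝ) (lam : ℝ) :
    lam ∈ spectrum ℝ M ↔ ∃ v : m → ℝ, v ≠ 0 ∧ M.mulVec v = lam • v := by
  rw [spectrum.mem_iff, Matrix.isUnit_iff_isUnit_det, isUnit_iff_ne_zero, not_not,
      ← Matrix.exists_mulVec_eq_zero_iff]
  constructor
  · rintro ⟨v, hv, h⟩
    refine ⟨v, hv, ?_⟩
    rw [Matrix.sub_mulVec, sub_eq_zero] at h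
    rw [← h, Algebra.algebraMap_eq_smul_one, Matrix.smul_mulVec, Matrix.one_mulVec]
  · rintro ⟨v, hv, h⟩
    refine ⟨v, hv, ?_⟩
    rw [Matrix.sub_mulVec, sub_eq_zero, h,
      Algebra.algebraMap_eq_smul_one, Matrix.smul_mulVec, Matrix.one_mulVec]

lemma I_zero_eq (s t : I 0) : s = t := by
  funext i; exact absurd i.2 (by omega)

lemma three_mem (n : ℕ) : (3:ℝ) ∈ spectrum ℝ (hanoiAdj n) := by
  rw [mem_spec_iff]
  refine ⟨fun _ => 1, ?_, ?_⟩
  · intro h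
    have h1 := congrFun h (fun _ => 0)
    simp at h1
  · show (hanoiGenA n + hanoiGenB n + hanoiGenC n).mulVec _ = _
    rw [Matrix.add_mulVec, Matrix.add_mulVec, onesA, onesB, onesC]
    funext t
    simp [Pi.add_apply]
    norm_num

lemma zero_mem (n : ℕ) : (0:ℝ) ∈ spectrum ℝ (hanoiAdj (n+1)) := by
  rw [mem_spec_iff]
  refine ⟨fun u => (![(1:ℝ), -1, 0]) (u 0), ?_, ?_⟩
  · intro h
    have h1 := congrFun h (fun _ => 0)
    norm_num at h1
  · refine funext (cons_cases (fun t => ?_) (fun t => ?_) (fun t => ?_))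
    · beta_reduce
      rw [adj0]
      have hc : (fun s : I n => (![(1:ℝ), -1, 0]) ((Fin.cons 0 s : I (n+1)) 0))
          = fun _ => (1:ℝ) := by
        funext s; simp
      rw [hc, constC]
      simp
    · beta_reduce
      rw [adj1]
      have hc : (fun s : I n => (![(1:ℝ), -1, 0]) ((Fin.cons 1 s : I (n+1)) 0))
          = fun _ => (-1:ℝ) := by
        funext s; simp
      rw [hc, constB]
      simp
    · beta_reduce
      rw [adj2]
      have hc : (fun s : I n => (![(1:ℝ), -1, 0]) ((Fin.cons 2 s : I (n+1)) 0))
          = fun _ => (0:ℝ) := by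
        funext s; simp
      rw [hc, constA]
      simp

lemma cons_one {n : ℕ} (j : Fin 3) (t : I (n+1)) : (Fin.cons j t : I (n+2)) 1 = t 0 := by
  rw [← Fin.succ_zero_eq_one, Fin.cons_succ]

def gneg2 : Fin 3 → Fin 3 → ℝ := ![![0,-1,1],![1,0,-1],![-1,1,0]]

lemma mulVecC_head {n : ℕ} (g : Fin 3 → ℝ) :
    (hanoiGenC (n+1)).mulVec (fun s => g (s 0))
      = fun s => (![g 0, g 2, g 1]) (s 0) := by
  refine funext (cons_cases (fun r => ?_) (fun r => ?_) (fun r => ?_))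
  · beta_reduce
    rw [mulVecC0]
    have hc : (fun s : I n => g ((Fin.cons 0 s : I (n+1)) 0)) = fun _ => g 0 := by
      funext s; simp
    rw [show (fun s : I n => (fun s' : I (n+1) => g (s' 0)) (Fin.cons 0 s)) = fun _ => g 0
      from hc, constC]
    simp
  · beta_reduce
    rw [mulVecC1]; simp
  · beta_reduce
    rw [mulVecC2]; simp

lemma mulVecB_head {n : ℕ} (g : Fin 3 → ℝ) :
    (hanoiGenB (n+1)).mulVec (fun s => g (s 0))
      = fun s => (![g 2, g 1, g 0]) (s 0) := by
  refine funext (cons_cases (fun r => ?_) (fun r => ?_) (fun r => ?_))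
  · beta_reduce
    rw [mulVecB0]; simp
  · beta_reduce
    rw [mulVecB1]
    have hc : (fun s : I n => g ((Fin.cons 1 s : I (n+1)) 0)) = fun _ => g 1 := by
      funext s; simp
    rw [show (fun s : I n => (fun s' : I (n+1) => g (s' 0)) (Fin.cons 1 s)) = fun _ => g 1
      from hc, constB]
    simp
  · beta_reduce
    rw [mulVecB2]; simp

lemma mulVecA_head {n : ℕ} (g : Fin 3 → ℝ) :
    (hanoiGenA (n+1)).mulVec (fun s => g (s 0))
      = fun s => (![g 1, g 0, g 2]) (s 0) := by
  refine funext (cons_cases (fun r => ?_) (fun r => ?_) (fun r => ?_))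
  · beta_reduce
    rw [mulVecA0]; simp
  · beta_reduce
    rw [mulVecA1]; simp
  · beta_reduce
    rw [mulVecA2]
    have hc : (fun s : I n => g ((Fin.cons 2 s : I (n+1)) 0)) = fun _ => g 2 := by
      funext s; simp
    rw [show (fun s : I n => (fun s' : I (n+1) => g (s' 0)) (Fin.cons 2 s)) = fun _ => g 2
      from hc, constA]
    simp

lemma neg2_mem (n : ℕ) : (-2:ℝ) ∈ spectrum ℝ (hanoiAdj (n+2)) := by
  rw [mem_spec_iff]
  refine ⟨fun u => gneg2 (u 0) (u 1), ?_, ?_⟩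
  · intro h
    have h1 := congrFun h (Fin.cons 0 (Fin.cons 1 (fun _ => 0)))
    rw [Pi.zero_apply] at h1
    simp only [Fin.cons_zero, cons_one] at h1
    norm_num [gneg2] at h1
  · have hcomp : ∀ j : Fin 3,
        (fun s : I (n+1) => (fun u : I (n+2) => gneg2 (u 0) (u 1)) (Fin.cons j s))
          = fun s => gneg2 j (s 0) := by
      intro j; funext s; simp only [Fin.cons_zero, cons_one]
    refine funext (cons_cases (fun t => ?_) (fun t => ?_) (fun t => ?_))
    · beta_reduce
      rw [adj0, hcomp 0, mulVecC_head]
      simp only [Fin.cons_zero, cons_one, Pi.smul_apply, smul_eq_mul]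
      generalize t 0 = k
      fin_cases k <;> simp [gneg2, Fin.isValue, Matrix.cons_val_two, Matrix.vecHead, Matrix.vecTail] <;> norm_num
    · beta_reduce
      rw [adj1, hcomp 1, mulVecB_head]
      simp only [Fin.cons_zero, cons_one, Pi.smul_apply, smul_eq_mul]
      generalize t 0 = k
      fin_cases k <;> simp [gneg2, Fin.isValue, Matrix.cons_val_two, Matrix.vecHead, Matrix.vecTail] <;> norm_num
    · beta_reduce
      rw [adj2, hcomp 2, mulVecA_head]
      simp only [Fin.cons_zero, cons_one, Pi.smul_apply, smul_eq_mul]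
      generalize t 0 = k
      fin_cases k <;> simp [gneg2, Fin.isValue, Matrix.cons_val_two, Matrix.vecHead, Matrix.vecTail] <;> norm_num

lemma step_forward {n : ℕ} {lam : ℝ} (h : lam ∈ spectrum ℝ (hanoiAdj (n+1))) :
    lam = 0 ∨ hanoiF lam ∈ spectrum ℝ (hanoiAdj n) := by
  by_cases hl0 : lam = 0
  · exact Or.inl hl0
  right
  by_cases hl2 : lam = -2
  · subst hl2
    have h3 : hanoiF (-2) = 3 := by norm_num [hanoiF]
    rw [h3]
    exact three_mem n
  rw [mem_spec_iff] at h
  obtain ⟨v, hv0, hv⟩ := h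
  have e0 : ∀ t, (hanoiGenC n).mulVec (fun s => v (Fin.cons 0 s)) t
      + v (Fin.cons 1 t) + v (Fin.cons 2 t) = lam * v (Fin.cons 0 t) := by
    intro t
    have h' := congrFun hv (Fin.cons 0 t)
    rw [adj0] at h'
    simpa using h'
  have e1 : ∀ t, v (Fin.cons 0 t) + (hanoiGenB n).mulVec (fun s => v (Fin.cons 1 s)) t
      + v (Fin.cons 2 t) = lam * v (Fin.cons 1 t) := by
    intro t
    have h' := congrFun hv (Fin.cons 1 t)
    rw [adj1] at h'
    simpa using h'
  have e2 : ∀ t, v (Fin.cons 0 t) + v (Fin.cons 1 t)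
      + (hanoiGenA n).mulVec (fun s => v (Fin.cons 2 s)) t = lam * v (Fin.cons 2 t) := by
    intro t
    have h' := congrFun hv (Fin.cons 2 t)
    rw [adj2] at h'
    simpa using h'
  -- function versions
  have E0 : (hanoiGenC n).mulVec (fun s => v (Fin.cons 0 s))
      = (lam • fun t => v (Fin.cons 0 t)) - (fun t => v (Fin.cons 1 t))
        - (fun t => v (Fin.cons 2 t)) := by
    funext t
    have := e0 t
    simp only [Pi.sub_apply, Pi.smul_apply, smul_eq_mul]
    linarith
  have E1 : (hanoiGenB n).mulVec (fun s => v (Fin.cons 1 s))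
      = (lam • fun t => v (Fin.cons 1 t)) - (fun t => v (Fin.cons 0 t))
        - (fun t => v (Fin.cons 2 t)) := by
    funext t
    have := e1 t
    simp only [Pi.sub_apply, Pi.smul_apply, smul_eq_mul]
    linarith
  have E2 : (hanoiGenA n).mulVec (fun s => v (Fin.cons 2 s))
      = (lam • fun t => v (Fin.cons 2 t)) - (fun t => v (Fin.cons 0 t))
        - (fun t => v (Fin.cons 1 t)) := by
    funext t
    have := e2 t
    simp only [Pi.sub_apply, Pi.smul_apply, smul_eq_mul]
    linarith
  have H0 : ∀ t, v (Fin.cons 0 t)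
      = lam * (hanoiGenC n).mulVec (fun s => v (Fin.cons 0 s)) t
        - (hanoiGenC n).mulVec (fun s => v (Fin.cons 1 s)) t
        - (hanoiGenC n).mulVec (fun s => v (Fin.cons 2 s)) t := by
    intro t
    have h' := congrFun (congrArg (hanoiGenC n).mulVec E0) t
    rw [Matrix.mulVec_sub, Matrix.mulVec_sub, Matrix.mulVec_smul] at h'
    rw [invC] at h'
    simpa using h'
  have H1 : ∀ t, v (Fin.cons 1 t)
      = lam * (hanoiGenB n).mulVec (fun s => v (Fin.cons 1 s)) t
        - (hanoiGenB n).mulVec (fun s => v (Fin.cons 0 s)) t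
        - (hanoiGenB n).mulVec (fun s => v (Fin.cons 2 s)) t := by
    intro t
    have h' := congrFun (congrArg (hanoiGenB n).mulVec E1) t
    rw [Matrix.mulVec_sub, Matrix.mulVec_sub, Matrix.mulVec_smul] at h'
    rw [invB] at h'
    simpa using h'
  have H2 : ∀ t, v (Fin.cons 2 t)
      = lam * (hanoiGenA n).mulVec (fun s => v (Fin.cons 2 s)) t
        - (hanoiGenA n).mulVec (fun s => v (Fin.cons 0 s)) t
        - (hanoiGenA n).mulVec (fun s => v (Fin.cons 1 s)) t := by
    intro t
    have h' := congrFun (congrArg (hanoiGenA n).mulVec E2) t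
    rw [Matrix.mulVec_sub, Matrix.mulVec_sub, Matrix.mulVec_smul] at h'
    rw [invA] at h'
    simpa using h'
  set S : I n → ℝ := fun t => v (Fin.cons 0 t) + v (Fin.cons 1 t) + v (Fin.cons 2 t) with hS
  by_cases hSne : S = 0
  · -- contradiction: v = 0
    exfalso
    have hsum : ∀ t, v (Fin.cons 0 t) + v (Fin.cons 1 t) + v (Fin.cons 2 t) = 0 := by
      intro t
      have := congrFun hSne t
      simpa [hS] using this
    have hfac : lam ^ 2 + 2 * lam ≠ 0 := by
      intro hcon
      have : lam * (lam + 2) = 0 := by linear_combination hcon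
      rcases mul_eq_zero.mp this with h' | h'
      · exact hl0 h'
      · exact hl2 (by linarith)
    have hx : ∀ t, v (Fin.cons 0 t) = 0 := by
      have hCx : (hanoiGenC n).mulVec (fun s => v (Fin.cons 0 s))
          = (lam + 1) • fun t => v (Fin.cons 0 t) := by
        funext t
        have h1 := e0 t
        have h2 := hsum t
        simp only [Pi.smul_apply, smul_eq_mul]
        linarith
      intro t
      have h' := congrFun (congrArg (hanoiGenC n).mulVec hCx) t
      rw [Matrix.mulVec_smul, invC, hCx] at h'
      simp only [Pi.smul_apply, smul_eq_mul] at h'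
      -- h' : v (cons 0 t) = (lam+1) * ((lam+1) * v (cons 0 t))
      have : (lam ^ 2 + 2 * lam) * v (Fin.cons 0 t) = 0 := by linear_combination -h'
      exact (mul_eq_zero.mp this).resolve_left hfac
    have hy : ∀ t, v (Fin.cons 1 t) = 0 := by
      have hBy : (hanoiGenB n).mulVec (fun s => v (Fin.cons 1 s))
          = (lam + 1) • fun t => v (Fin.cons 1 t) := by
        funext t
        have h1 := e1 t
        have h2 := hsum t
        simp only [Pi.smul_apply, smul_eq_mul]
        linarith
      intro t
      have h' := congrFun (congrArg (hanoiGenB n).mulVec hBy) t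
      rw [Matrix.mulVec_smul, invB, hBy] at h'
      simp only [Pi.smul_apply, smul_eq_mul] at h'
      have : (lam ^ 2 + 2 * lam) * v (Fin.cons 1 t) = 0 := by linear_combination -h'
      exact (mul_eq_zero.mp this).resolve_left hfac
    have hz : ∀ t, v (Fin.cons 2 t) = 0 := by
      have hAz : (hanoiGenA n).mulVec (fun s => v (Fin.cons 2 s))
          = (lam + 1) • fun t => v (Fin.cons 2 t) := by
        funext t
        have h1 := e2 t
        have h2 := hsum t
        simp only [Pi.smul_apply, smul_eq_mul]
        linarith
      intro t
      have h' := congrFun (congrArg (hanoiGenA n).mulVec hAz) t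
      rw [Matrix.mulVec_smul, invA, hAz] at h'
      simp only [Pi.smul_apply, smul_eq_mul] at h'
      have : (lam ^ 2 + 2 * lam) * v (Fin.cons 2 t) = 0 := by linear_combination -h'
      exact (mul_eq_zero.mp this).resolve_left hfac
    apply hv0
    refine funext (cons_cases (fun t => ?_) (fun t => ?_) (fun t => ?_))
    · beta_reduce; rw [hx t]; rfl
    · beta_reduce; rw [hy t]; rfl
    · beta_reduce; rw [hz t]; rfl
  · rw [mem_spec_iff]
    refine ⟨S, hSne, ?_⟩
    have hSdec : S = (fun t => v (Fin.cons 0 t)) + (fun t => v (Fin.cons 1 t))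
        + (fun t => v (Fin.cons 2 t)) := by
      funext t; simp [hS]
    funext t
    show (hanoiGenA n + hanoiGenB n + hanoiGenC n).mulVec S t = _
    rw [hSdec]
    simp only [Matrix.add_mulVec, Matrix.mulVec_add, Pi.add_apply, Pi.smul_apply,
      smul_eq_mul, hanoiF]
    have a0 := H0 t
    have a1 := H1 t
    have a2 := H2 t
    have b0 := e0 t
    have b1 := e1 t
    have b2 := e2 t
    linear_combination a0 + a1 + a2 + (lam + 1) * (b0 + b1 + b2)

lemma step_backward {n : ℕ} {lam : ℝ} (hl0 : lam ≠ 0) (hl2 : lam ≠ -2)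
    (h : hanoiF lam ∈ spectrum ℝ (hanoiAdj n)) :
    lam ∈ spectrum ℝ (hanoiAdj (n+1)) := by
  rw [mem_spec_iff] at h ⊢
  obtain ⟨w, hw0, hw⟩ := h
  have hws : ∀ s, (hanoiGenA n).mulVec w s + (hanoiGenB n).mulVec w s
      + (hanoiGenC n).mulVec w s = (lam ^ 2 - lam - 3) * w s := by
    intro s
    have h' := congrFun hw s
    rw [show hanoiAdj n = hanoiGenA n + hanoiGenB n + hanoiGenC n from rfl] at h'
    simp only [Matrix.add_mulVec, Pi.add_apply, Pi.smul_apply, smul_eq_mul, hanoiF] at h'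
    linarith
  refine ⟨fun u => (![(hanoiGenC n).mulVec w + (lam+1) • w,
                     (hanoiGenB n).mulVec w + (lam+1) • w,
                     (hanoiGenA n).mulVec w + (lam+1) • w] : Fin 3 → I n → ℝ)
            (u 0) (Fin.tail u), ?_, ?_⟩
  · intro hcon
    have hx : ∀ t, (hanoiGenC n).mulVec w t = -(lam+1) * w t := by
      intro t
      have h' := congrFun hcon (Fin.cons 0 t)
      simp only [Fin.cons_zero, Fin.tail_cons, Matrix.cons_val_zero, Pi.zero_apply,
        Pi.add_apply, Pi.smul_apply, smul_eq_mul] at h'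
      linarith
    have hy : ∀ t, (hanoiGenB n).mulVec w t = -(lam+1) * w t := by
      intro t
      have h' := congrFun hcon (Fin.cons 1 t)
      simp only [Fin.cons_zero, Fin.tail_cons, Matrix.cons_val_one, Matrix.head_cons,
        Matrix.cons_val_zero, Pi.zero_apply, Pi.add_apply, Pi.smul_apply, smul_eq_mul] at h'
      linarith
    have hz : ∀ t, (hanoiGenA n).mulVec w t = -(lam+1) * w t := by
      intro t
      have h' := congrFun hcon (Fin.cons 2 t)
      simp only [Fin.cons_zero, Fin.tail_cons, Pi.zero_apply,
        Pi.add_apply, Pi.smul_apply, smul_eq_mul] at h'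
      rw [show ((![(hanoiGenC n).mulVec w + (lam+1) • w,
            (hanoiGenB n).mulVec w + (lam+1) • w,
            (hanoiGenA n).mulVec w + (lam+1) • w] : Fin 3 → I n → ℝ) 2)
          = (hanoiGenA n).mulVec w + (lam+1) • w from rfl] at h'
      simp only [Pi.add_apply, Pi.smul_apply, smul_eq_mul] at h'
      linarith
    apply hw0
    funext t
    have h1 := hws t
    rw [hx t, hy t, hz t] at h1
    have hfac : lam ^ 2 + 2 * lam ≠ 0 := by
      intro hcon2
      have : lam * (lam + 2) = 0 := by linear_combination hcon2
      rcases mul_eq_zero.mp this with h' | h'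
      · exact hl0 h'
      · exact hl2 (by linarith)
    have h2 : (lam ^ 2 + 2 * lam) * w t = 0 := by linear_combination -h1
    exact (mul_eq_zero.mp h2).resolve_left hfac
  · refine funext (cons_cases (fun t => ?_) (fun t => ?_) (fun t => ?_))
    · beta_reduce
      rw [adj0]
      have hc : (fun s : I n => (![(hanoiGenC n).mulVec w + (lam+1) • w,
            (hanoiGenB n).mulVec w + (lam+1) • w,
            (hanoiGenA n).mulVec w + (lam+1) • w] : Fin 3 → I n → ℝ)
          ((Fin.cons 0 s : I (n+1)) 0) (Fin.tail (Fin.cons 0 s : I (n+1))))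
          = (hanoiGenC n).mulVec w + (lam+1) • w := by
        funext s; rw [Fin.cons_zero, Fin.tail_cons]; rfl
      rw [hc]
      rw [Matrix.mulVec_add, Matrix.mulVec_smul, invC]
      simp only [Fin.cons_zero, Fin.tail_cons, Matrix.cons_val_one, Matrix.head_cons,
        Matrix.cons_val_zero, Pi.add_apply, Pi.smul_apply, smul_eq_mul]
      rw [show ((![(hanoiGenC n).mulVec w + (lam+1) • w,
            (hanoiGenB n).mulVec w + (lam+1) • w,
            (hanoiGenA n).mulVec w + (lam+1) • w] : Fin 3 → I n → ℝ) 2)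
          = (hanoiGenA n).mulVec w + (lam+1) • w from rfl]
      simp only [Pi.add_apply, Pi.smul_apply, smul_eq_mul]
      linear_combination hws t
    · beta_reduce
      rw [adj1]
      have hc : (fun s : I n => (![(hanoiGenC n).mulVec w + (lam+1) • w,
            (hanoiGenB n).mulVec w + (lam+1) • w,
            (hanoiGenA n).mulVec w + (lam+1) • w] : Fin 3 → I n → ℝ)
          ((Fin.cons 1 s : I (n+1)) 0) (Fin.tail (Fin.cons 1 s : I (n+1))))
          = (hanoiGenB n).mulVec w + (lam+1) • w := by
        funext s; rw [Fin.cons_zero, Fin.tail_cons]; rfl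
      rw [hc]
      rw [Matrix.mulVec_add, Matrix.mulVec_smul, invB]
      simp only [Fin.cons_zero, Fin.tail_cons, Matrix.cons_val_one, Matrix.head_cons,
        Matrix.cons_val_zero, Pi.add_apply, Pi.smul_apply, smul_eq_mul]
      rw [show ((![(hanoiGenC n).mulVec w + (lam+1) • w,
            (hanoiGenB n).mulVec w + (lam+1) • w,
            (hanoiGenA n).mulVec w + (lam+1) • w] : Fin 3 → I n → ℝ) 2)
          = (hanoiGenA n).mulVec w + (lam+1) • w from rfl]
      simp only [Pi.add_apply, Pi.smul_apply, smul_eq_mul]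
      linear_combination hws t
    · beta_reduce
      rw [adj2]
      have hc : (fun s : I n => (![(hanoiGenC n).mulVec w + (lam+1) • w,
            (hanoiGenB n).mulVec w + (lam+1) • w,
            (hanoiGenA n).mulVec w + (lam+1) • w] : Fin 3 → I n → ℝ)
          ((Fin.cons 2 s : I (n+1)) 0) (Fin.tail (Fin.cons 2 s : I (n+1))))
          = (hanoiGenA n).mulVec w + (lam+1) • w := by
        funext s; rw [Fin.cons_zero, Fin.tail_cons]; rfl
      rw [hc]
      rw [Matrix.mulVec_add, Matrix.mulVec_smul, invA]
      simp only [Fin.cons_zero, Fin.tail_cons, Matrix.cons_val_one, Matrix.head_cons,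
        Matrix.cons_val_zero, Pi.add_apply, Pi.smul_apply, smul_eq_mul]
      rw [show ((![(hanoiGenC n).mulVec w + (lam+1) • w,
            (hanoiGenB n).mulVec w + (lam+1) • w,
            (hanoiGenA n).mulVec w + (lam+1) • w] : Fin 3 → I n → ℝ) 2)
          = (hanoiGenA n).mulVec w + (lam+1) • w from rfl]
      simp only [Pi.add_apply, Pi.smul_apply, smul_eq_mul]
      linear_combination hws t

lemma spec0 (lam : ℝ) : lam ∈ spectrum ℝ (hanoiAdj 0) ↔ lam = 3 := by
  rw [mem_spec_iff]
  have hmv : ∀ v : I 0 → ℝ, (hanoiAdj 0).mulVec v = (3:ℝ) • v := by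
    intro v
    show ((1:Matrix (I 0) (I 0) ℝ) + 1 + 1).mulVec v = _
    rw [Matrix.add_mulVec, Matrix.add_mulVec, Matrix.one_mulVec]
    funext t
    simp only [Pi.add_apply, Pi.smul_apply, smul_eq_mul]
    ring
  constructor
  · rintro ⟨v, hv0, hv⟩
    rw [hmv] at hv
    obtain ⟨u, hu⟩ := Function.ne_iff.mp hv0
    have h' := congrFun hv u
    simp only [Pi.smul_apply, smul_eq_mul] at h'
    have hu' : v u ≠ 0 := by simpa using hu
    have := mul_right_cancel₀ hu' h'
    linarith
  · rintro rfl
    refine ⟨fun _ => 1, ?_, hmv _⟩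
    intro h
    have h1 := congrFun h (fun _ => 0)
    simp at h1

lemma neg2_not_spec1 : (-2:ℝ) ∉ spectrum ℝ (hanoiAdj 1) := by
  intro h
  rw [mem_spec_iff] at h
  obtain ⟨v, hv0, hv⟩ := h
  have key : ∀ t : I 0, v (Fin.cons 0 t) = 0 ∧ v (Fin.cons 1 t) = 0 ∧ v (Fin.cons 2 t) = 0 := by
    intro t
    have e0 := congrFun hv (Fin.cons 0 t)
    have e1 := congrFun hv (Fin.cons 1 t)
    have e2 := congrFun hv (Fin.cons 2 t)
    rw [adj0] at e0; rw [adj1] at e1; rw [adj2] at e2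
    rw [show (hanoiGenC 0).mulVec (fun s => v (Fin.cons 0 s))
        = fun s => v (Fin.cons 0 s) from Matrix.one_mulVec _] at e0
    rw [show (hanoiGenB 0).mulVec (fun s => v (Fin.cons 1 s))
        = fun s => v (Fin.cons 1 s) from Matrix.one_mulVec _] at e1
    rw [show (hanoiGenA 0).mulVec (fun s => v (Fin.cons 2 s))
        = fun s => v (Fin.cons 2 s) from Matrix.one_mulVec _] at e2
    simp only [Pi.smul_apply, smul_eq_mul] at e0 e1 e2
    refine ⟨by linarith, by linarith, by linarith⟩
  apply hv0
  refine funext (cons_cases (fun t => ?_) (fun t => ?_) (fun t => ?_))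
  · beta_reduce; rw [(key t).1]; rfl
  · beta_reduce; rw [(key t).2.1]; rfl
  · beta_reduce; rw [(key t).2.2]; rfl

lemma quad {lam : ℝ} : hanoiF lam = 3 ↔ lam = 3 ∨ lam = -2 := by
  constructor
  · intro h
    rw [hanoiF] at h
    have h' : (lam - 3) * (lam + 2) = 0 := by linear_combination h
    rcases mul_eq_zero.mp h' with h'' | h''
    · left; linarith
    · right; linarith
  · rintro (rfl | rfl) <;> norm_num [hanoiF]

lemma spec1 (lam : ℝ) : lam ∈ spectrum ℝ (hanoiAdj 1) ↔ lam = 3 ∨ lam = 0 := by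
  constructor
  · intro h
    rcases step_forward h with h0 | hf
    · exact Or.inr h0
    · rw [spec0] at hf
      rcases quad.mp hf with h3 | h2
      · exact Or.inl h3
      · subst h2
        exact absurd h neg2_not_spec1
  · rintro (rfl | rfl)
    · exact three_mem 1
    · exact zero_mem 0

lemma recur {n : ℕ} (hn : 1 ≤ n) (lam : ℝ) :
    lam ∈ spectrum ℝ (hanoiAdj (n+1)) ↔ lam = 0 ∨ hanoiF lam ∈ spectrum ℝ (hanoiAdj n) := by
  constructor
  · exact step_forward
  · rintro (rfl | hf)
    · exact zero_mem n
    · by_cases hl0 : lam = 0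
      · subst hl0; exact zero_mem n
      by_cases hl2 : lam = -2
      · subst hl2
        obtain ⟨m, rfl⟩ : ∃ m, n = m + 1 := ⟨n - 1, by omega⟩
        exact neg2_mem m
      exact step_backward hl0 hl2 hf

lemma main : ∀ n : ℕ, 1 ≤ n → ∀ lam : ℝ,
    (lam ∈ spectrum ℝ (hanoiAdj n) ↔
      lam = 3 ∨ (∃ i : ℕ, i + 1 ≤ n ∧ hanoiF^[i] lam = 0) ∨
        ∃ j : ℕ, j + 2 ≤ n ∧ hanoiF^[j] lam = -2) := by
  intro n hn
  induction n, hn using Nat.le_induction with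
  | base =>
    intro lam
    rw [spec1]
    constructor
    · rintro (rfl | rfl)
      · exact Or.inl rfl
      · exact Or.inr (Or.inl ⟨0, by omega, by simp⟩)
    · rintro (rfl | ⟨i, hi, hfi⟩ | ⟨j, hj, _⟩)
      · exact Or.inl rfl
      · have : i = 0 := by omega
        subst this
        simp at hfi
        exact Or.inr hfi
      · omega
  | succ n hn ih =>
    intro lam
    rw [recur hn lam]
    constructor
    · rintro (rfl | hf)
      · exact Or.inr (Or.inl ⟨0, by omega, by simp⟩)
      · rcases (ih (hanoiF lam)).mp hf with h3 | ⟨i, hi, hfi⟩ | ⟨j, hj, hfj⟩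
        · rcases quad.mp h3 with rfl | rfl
          · exact Or.inl rfl
          · exact Or.inr (Or.inr ⟨0, by omega, by simp⟩)
        · exact Or.inr (Or.inl ⟨i + 1, by omega, by rwa [Function.iterate_succ_apply]⟩)
        · exact Or.inr (Or.inr ⟨j + 1, by omega, by rwa [Function.iterate_succ_apply]⟩)
    · rintro (rfl | ⟨i, hi, hfi⟩ | ⟨j, hj, hfj⟩)
      · exact Or.inr ((ih _).mpr (Or.inl (quad.mpr (Or.inl rfl))))
      · match i with
        | 0 =>
          left
          simpa using hfi
        | i + 1 =>
          rw [Function.iterate_succ_apply] at hfi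
          exact Or.inr ((ih _).mpr (Or.inr (Or.inl ⟨i, by omega, hfi⟩)))
      · match j with
        | 0 =>
          right
          simp only [Function.iterate_zero_apply] at hfj
          subst hfj
          exact (ih _).mpr (Or.inl (quad.mpr (Or.inr rfl)))
        | j + 1 =>
          rw [Function.iterate_succ_apply] at hfj
          exact Or.inr ((ih _).mpr (Or.inr (Or.inr ⟨j, by omega, hfj⟩)))

end HanoiAux

/-- The spectrum of the adjacency matrix `Δₙ` of the level-`n` Schreier graph of the Hanoi
Towers group on three pegs, for `n ≥ 1`, equals
`{3} ∪ ⋃_{i=0}^{n-1} f^{-i}(0) ∪ ⋃_{j=0}^{n-2} f^{-j}(-2)` where `f(x) = x² - x - 3`. -/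
theorem hanoiAdj_spectrum (n : ℕ) (hn : 1 ≤ n) (lam : ℝ) :
    lam ∈ spectrum ℝ (hanoiAdj n) ↔
      lam = 3 ∨ (∃ i : ℕ, i + 1 ≤ n ∧ hanoiF^[i] lam = 0) ∨
        ∃ j : ℕ, j + 2 ≤ n ∧ hanoiF^[j] lam = -2 :=
  HanoiAux.main n hn lam
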